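/- Let J : ℝ³ → ℂ³ be essentially bounded with compact support D, let x̂₀ ∈ ℝ³ be a unit vector, let e ∈ ℝ³ be a unit vector with e·x̂₀ = 0, and let K = (k_min, k_max) with 0 < k_min < k_max. Suppose z ∈ ℝ³ and δ > 0 satisfy |x̂₀·(z − y)| ≥ δ for all y ∈ D. Then the phased indicator satisfies the decay bound I_{x̂₀}(z, e) := | ∫_K e · E^∞(x̂₀, k; J) exp(i k x̂₀·z) dk | ≤ (2 k_max √(μ/ε) / δ) · ∫_{ℝ³} |e·J(y)| dy. In particular the indicator decays like the reciprocal of the distance of the sampling point z from the strip S(x̂₀; J). -/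

import Mathlib

open MeasureTheory Complex

noncomputable section

abbrev R3 := EuclideanSpace ℝ (Fin 3)
abbrev C3 := EuclideanSpace ℂ (Fin 3)

/-- The complex component of a ℂ³-vector in a real direction `e`. -/
def dotC (e : R3) (w : C3) : ℂ := ∑ i, (e i : ℂ) * w i

/-- The complexification of a real vector. -/
def cplx (x : R3) : C3 := (WithLp.equiv 2 (Fin 3 → ℂ)).symm fun i => (x i : ℂ)

/-- The electric far field pattern `E^∞(x̂, k; J) = iωμ (v − (x̂·v) x̂)`,
where `ω = k/√(εμ)` and `v = ∫ exp(−ik x̂·y) J(y) dy`. -/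
def farField (ε μ k : ℝ) (J : R3 → C3) (x : R3) : C3 :=
  (Complex.I * ((k / Real.sqrt (ε * μ) : ℝ) : ℂ) * (μ : ℂ)) •
    ((∫ y, Complex.exp (-Complex.I * (k : ℂ) * ((inner ℝ x y : ℝ) : ℂ)) • J y) -
      (dotC x (∫ y, Complex.exp (-Complex.I * (k : ℂ) * ((inner ℝ x y : ℝ) : ℂ)) • J y)) • cplx x)

/-- The phased direct sampling indicator
`I_{x̂₀}(z, e) = |∫_K e·E^∞(x̂₀, k; J) exp(i k x̂₀·z) dk|`. -/
def phasedIndicator (ε μ : ℝ) (J : R3 → C3) (xhat e : R3) (kmin kmax : ℝ) (z : R3) : ℝ :=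
  ‖∫ k in Set.Ioo kmin kmax,
    dotC e (farField ε μ k J xhat) * Complex.exp (Complex.I * k * ((inner ℝ xhat z : ℝ) : ℂ))‖

lemma dotC_eq_inner (e : R3) (w : C3) : dotC e w = (inner ℂ (cplx e) w : ℂ) := by
  simp [dotC, cplx, PiLp.inner_apply, RCLike.inner_apply, WithLp.equiv_symm_apply, mul_comm]

lemma dotC_cplx (e x : R3) : dotC e (cplx x) = ((inner ℝ e x : ℝ) : ℂ) := by
  simp [dotC, cplx, PiLp.inner_apply, RCLike.inner_apply, WithLp.equiv_symm_apply, mul_comm]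

lemma dotC_smul (e : R3) (c : ℂ) (w : C3) : dotC e (c • w) = c * dotC e w := by
  simp [dotC_eq_inner, inner_smul_right]

lemma dotC_sub (e : R3) (u w : C3) : dotC e (u - w) = dotC e u - dotC e w := by
  simp [dotC_eq_inner, inner_sub_right]

lemma kernel_bound {a k1 k2 δ : ℝ} (hδ : 0 < δ) (ha : δ ≤ |a|) (h1 : 0 < k1) (h12 : k1 ≤ k2) :
    ‖∫ k in Set.Ioo k1 k2, (k : ℂ) * Complex.exp (Complex.I * k * a)‖ ≤ 2 * k2 / δ := by
  have ha0 : a ≠ 0 := by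
    intro h; rw [h] at ha; simp at ha; linarith
  set c : ℂ := Complex.I * a with hc
  have hc0 : c ≠ 0 := by
    simp [hc, Complex.I_ne_zero, Complex.ofReal_eq_zero, ha0]
  have hnormc : ‖c‖ = |a| := by
    simp [hc]
  have hexpnorm : ∀ t : ℝ, ‖Complex.exp (c * t)‖ = 1 := by
    intro t
    rw [Complex.norm_exp]
    simp [hc]
  -- rewrite integrand
  have hint_eq : ∀ k : ℝ, (k : ℂ) * Complex.exp (Complex.I * k * a) = (k : ℂ) * Complex.exp (c * k) := by
    intro k; rw [hc]; ring_nf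
  -- derivative
  have hder : ∀ k : ℝ, HasDerivAt (fun t : ℝ => Complex.exp (c * t) * ((t : ℂ) / c + 1 / (a : ℂ) ^ 2))
      ((k : ℂ) * Complex.exp (c * k)) k := by
    intro k
    have h0 : HasDerivAt (fun t : ℝ => (t : ℂ)) 1 k := Complex.ofRealCLM.hasDerivAt
    have h1 : HasDerivAt (fun t : ℝ => Complex.exp (c * t)) (c * Complex.exp (c * k)) k := by
      simpa [mul_comm] using ((h0.const_mul c).cexp)
    have h2 : HasDerivAt (fun t : ℝ => ((t : ℂ) / c + 1 / (a : ℂ) ^ 2)) (1 / c) k := by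
      exact (h0.div_const c).add_const (1 / (a : ℂ) ^ 2)
    have := h1.mul h2
    refine this.congr_deriv ?_
    have ha0' : (a : ℂ) ≠ 0 := Complex.ofReal_ne_zero.mpr ha0
    field_simp
    linear_combination (c + Complex.I * a) * hc + (a:ℂ)^2 * Complex.I_sq
  have hcont : Continuous fun k : ℝ => (k : ℂ) * Complex.exp (c * k) := by
    continuity
  have hFTC : (∫ k in k1..k2, (k : ℂ) * Complex.exp (c * k)) =
      Complex.exp (c * k2) * ((k2 : ℂ) / c + 1 / (a : ℂ) ^ 2)
        - Complex.exp (c * k1) * ((k1 : ℂ) / c + 1 / (a : ℂ) ^ 2) :=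
    intervalIntegral.integral_eq_sub_of_hasDerivAt (fun k _ => hder k)
      (hcont.intervalIntegrable _ _)
  have hset : (∫ k in Set.Ioo k1 k2, (k : ℂ) * Complex.exp (Complex.I * k * a)) =
      ∫ k in k1..k2, (k : ℂ) * Complex.exp (c * k) := by
    simp_rw [hint_eq]
    rw [intervalIntegral.integral_of_le h12, MeasureTheory.integral_Ioc_eq_integral_Ioo]
  rw [hset, hFTC]
  -- split
  have hsplit : Complex.exp (c * k2) * ((k2 : ℂ) / c + 1 / (a : ℂ) ^ 2)
        - Complex.exp (c * k1) * ((k1 : ℂ) / c + 1 / (a : ℂ) ^ 2)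
      = (Complex.exp (c * k2) * k2 - Complex.exp (c * k1) * k1) / c
        + (Complex.exp (c * k2) - Complex.exp (c * k1)) * (1 / (a : ℂ) ^ 2) := by
    field_simp; ring
  rw [hsplit]
  have hdiff : ‖Complex.exp (c * k2) - Complex.exp (c * k1)‖ ≤ |a| * (k2 - k1) := by
    have heq : Complex.exp (c * k2) - Complex.exp (c * k1) = ∫ t in k1..k2, c * Complex.exp (c * t) := by
      rw [intervalIntegral.integral_eq_sub_of_hasDerivAt (f := fun t : ℝ => Complex.exp (c * t))
        (fun t _ => by
          have h0 : HasDerivAt (fun t : ℝ => (t : ℂ)) 1 t := Complex.ofRealCLM.hasDerivAt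
          simpa [mul_comm] using ((h0.const_mul c).cexp))
        ((by continuity : Continuous fun t : ℝ => c * Complex.exp (c * t)).intervalIntegrable _ _)]
    rw [heq]
    have := intervalIntegral.norm_integral_le_of_norm_le_const (C := |a|)
      (f := fun t : ℝ => c * Complex.exp (c * t)) (a := k1) (b := k2)
      (fun t _ => by rw [norm_mul, hexpnorm, hnormc]; simp)
    calc _ ≤ |a| * |k2 - k1| := this
    _ = |a| * (k2 - k1) := by rw [_root_.abs_of_nonneg (by linarith : (0:ℝ) ≤ k2 - k1)]
  have habs : 0 < |a| := lt_of_lt_of_le hδ ha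
  have hfirst : ‖(Complex.exp (c * k2) * k2 - Complex.exp (c * k1) * k1) / c‖ ≤ (k2 + k1) / |a| := by
    rw [norm_div, hnormc]
    gcongr
    calc ‖Complex.exp (c * k2) * k2 - Complex.exp (c * k1) * k1‖
        ≤ ‖Complex.exp (c * k2) * (k2:ℂ)‖ + ‖Complex.exp (c * k1) * (k1:ℂ)‖ := norm_sub_le _ _
      _ = k2 + k1 := by
          rw [norm_mul, norm_mul, hexpnorm, hexpnorm]
          simp [Complex.norm_real, _root_.abs_of_pos h1, _root_.abs_of_pos (lt_of_lt_of_le h1 h12)]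
  have hsecondnorm : ‖(1 : ℂ) / (a : ℂ) ^ 2‖ = 1 / a ^ 2 := by
    rw [norm_div, norm_pow]
    simp [Complex.norm_real, _root_.sq_abs]
  calc ‖(Complex.exp (c * k2) * k2 - Complex.exp (c * k1) * k1) / c
        + (Complex.exp (c * k2) - Complex.exp (c * k1)) * (1 / (a : ℂ) ^ 2)‖
      ≤ ‖(Complex.exp (c * k2) * k2 - Complex.exp (c * k1) * k1) / c‖
        + ‖(Complex.exp (c * k2) - Complex.exp (c * k1))‖ * ‖(1 : ℂ) / (a : ℂ) ^ 2‖ := by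
        rw [← norm_mul]; exact norm_add_le _ _
    _ ≤ (k2 + k1) / |a| + (|a| * (k2 - k1)) * (1 / a ^ 2) := by
        rw [hsecondnorm]
        exact add_le_add hfirst (mul_le_mul_of_nonneg_right hdiff (by positivity))
    _ = 2 * k2 / |a| := by
        field_simp
        linear_combination (k2 - k1) * _root_.sq_abs a
    _ ≤ 2 * k2 / δ := by
        gcongr
        linarith

/-- Decay of the phased indicator: if the sampling point `z` is at distance at least `δ`
from the strip `S(x̂₀; J)` in the direction `x̂₀`, then
`I_{x̂₀}(z, e) ≤ (2 k_max √(μ/ε) / δ) ∫ |e·J|`. -/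
theorem phasedIndicator_decay (ε μ : ℝ) (hε : 0 < ε) (hμ : 0 < μ)
    (J : R3 → C3) (hJb : MemLp J ⊤ volume) (hJc : HasCompactSupport J)
    (xhat : R3) (hxh : ‖xhat‖ = 1)
    (e : R3) (he : ‖e‖ = 1) (hex : (inner ℝ e xhat : ℝ) = 0)
    (kmin kmax : ℝ) (hkmin : 0 < kmin) (hkk : kmin < kmax)
    (z : R3) (δ : ℝ) (hδ : 0 < δ)
    (hfar : ∀ y ∈ tsupport J, δ ≤ |(inner ℝ xhat (z - y) : ℝ)|) :
    phasedIndicator ε μ J xhat e kmin kmax z ≤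
      (2 * kmax * Real.sqrt (μ / ε) / δ) * ∫ y, ‖dotC e (J y)‖ := by
  have hJint : Integrable J volume := by
    have := hJb.mono_exponent_of_measure_support_ne_top
      (s := tsupport J) (fun x hx => image_eq_zero_of_notMem_tsupport hx)
      (by exact (hJc.measure_lt_top).ne) (le_top : (1:ENNReal) ≤ ⊤)
    exact memLp_one_iff_integrable.mp this
  set s := Real.sqrt (ε * μ) with hs_def
  have hs : 0 < s := Real.sqrt_pos.2 (mul_pos hε hμ)
  set g : R3 → ℂ := fun y => dotC e (J y) with hg_def
  have hgi : Integrable g volume := by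
    have := (innerSL ℂ (cplx e)).integrable_comp hJint
    simpa [hg_def, dotC_eq_inner] using this
  set a : R3 → ℝ := fun y => (inner ℝ xhat (z - y) : ℝ) with ha_def
  have ha_cont : Continuous a := by
    apply Continuous.inner continuous_const
    exact continuous_const.sub continuous_id
  -- integrability of the y-integrand in farField
  have hφint : ∀ k : ℝ, Integrable
      (fun y => Complex.exp (-Complex.I * (k : ℂ) * ((inner ℝ xhat y : ℝ) : ℂ)) • J y) volume := by
    intro k
    apply hJint.smul_of_top_right (φ := fun y => Complex.exp (-Complex.I * (k : ℂ) * ((inner ℝ xhat y : ℝ) : ℂ)))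
    apply memLp_top_of_bound ?_ 1 (Filter.Eventually.of_forall fun y => ?_)
    · apply Continuous.aestronglyMeasurable
      apply Complex.continuous_exp.comp
      apply Continuous.mul continuous_const
      exact Complex.continuous_ofReal.comp (Continuous.inner continuous_const continuous_id)
    · rw [Complex.norm_exp]
      simp
  -- the k-integrand equals a y-integral
  have hkeq : ∀ k : ℝ,
      dotC e (farField ε μ k J xhat) * Complex.exp (Complex.I * k * ((inner ℝ xhat z : ℝ) : ℂ))
      = ∫ y, (Complex.I * (μ / s : ℝ) * g y) * ((k : ℂ) * Complex.exp (Complex.I * k * (a y : ℂ))) := by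
    intro k
    have h1 : dotC e (farField ε μ k J xhat)
        = (Complex.I * ((k / s : ℝ) : ℂ) * (μ : ℂ)) *
          ∫ y, Complex.exp (-Complex.I * (k : ℂ) * ((inner ℝ xhat y : ℝ) : ℂ)) * g y := by
      rw [farField, dotC_smul, dotC_sub, dotC_smul, dotC_cplx, hex]
      rw [dotC_eq_inner, ← integral_inner (hφint k)]
      simp only [Complex.ofReal_zero, mul_zero, sub_zero]
      congr 1
      apply integral_congr_ae; apply Filter.Eventually.of_forall; intro y
      simp [inner_smul_right, hg_def, dotC_eq_inner]
    rw [h1, ← MeasureTheory.integral_const_mul, ← MeasureTheory.integral_mul_const]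
    apply integral_congr_ae; apply Filter.Eventually.of_forall; intro y
    have hinner : (inner ℝ xhat (z - y) : ℝ) = (inner ℝ xhat z : ℝ) - (inner ℝ xhat y : ℝ) := by
      rw [inner_sub_right]
    have hexp : Complex.exp (Complex.I * k * ((inner ℝ xhat z : ℝ) : ℂ)) *
        Complex.exp (-Complex.I * (k : ℂ) * ((inner ℝ xhat y : ℝ) : ℂ))
        = Complex.exp (Complex.I * k * ((a y : ℝ) : ℂ)) := by
      rw [← Complex.exp_add]
      congr 1
      rw [ha_def]
      simp only [hinner, Complex.ofReal_sub]
      ring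
    have hC : Complex.I * ((k / s : ℝ) : ℂ) * (μ : ℂ) = Complex.I * ((μ / s : ℝ) : ℂ) * k := by
      push_cast; ring
    simp only [hC, ← hexp]
    ring
  -- Fubini setup
  set F : ℝ → R3 → ℂ := fun k y =>
    (Complex.I * ((μ / s : ℝ) : ℂ) * g y) * ((k : ℂ) * Complex.exp (Complex.I * k * (a y : ℂ)))
    with hF_def
  have hFnorm : ∀ k y, ‖F k y‖ = (|k| * (μ / s)) * ‖g y‖ := by
    intro k y
    have hre : ‖Complex.exp (Complex.I * k * (a y : ℂ))‖ = 1 := by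
      rw [Complex.norm_exp]; simp
    rw [hF_def]
    simp only [norm_mul, hre, Complex.norm_I, Complex.norm_real, Complex.norm_natCast,
      Real.norm_eq_abs, mul_one, one_mul]
    rw [_root_.abs_of_nonneg (by positivity : (0:ℝ) ≤ μ / s)]
    ring
  have hbd : Integrable (fun p : ℝ × R3 => (|p.1| * (μ / s)) * ‖g p.2‖)
      ((volume.restrict (Set.Ioo kmin kmax)).prod volume) := by
    have h1' : IntegrableOn (fun k : ℝ => |k| * (μ / s)) (Set.Icc kmin kmax) volume :=
      Continuous.integrableOn_Icc (by continuity)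
    have h1 : Integrable (fun k : ℝ => |k| * (μ / s)) (volume.restrict (Set.Ioo kmin kmax)) :=
      h1'.mono_set Set.Ioo_subset_Icc_self
    exact Integrable.mul_prod (f := fun k : ℝ => |k| * (μ / s)) (g := fun y => ‖g y‖) h1 hgi.norm
  have hFmeas : AEStronglyMeasurable (Function.uncurry F)
      ((volume.restrict (Set.Ioo kmin kmax)).prod volume) := by
    apply AEStronglyMeasurable.mul
    · exact (hgi.aestronglyMeasurable.comp_snd).const_mul _
    · exact ((Complex.continuous_ofReal.comp continuous_fst).mul
        (Complex.continuous_exp.comp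
          (((continuous_const.mul (Complex.continuous_ofReal.comp continuous_fst))).mul
            (Complex.continuous_ofReal.comp (ha_cont.comp continuous_snd))))).aestronglyMeasurable
  have hF : Integrable (Function.uncurry F)
      ((volume.restrict (Set.Ioo kmin kmax)).prod volume) := by
    apply hbd.mono' hFmeas
    apply Filter.Eventually.of_forall
    intro p
    rw [Function.uncurry, hFnorm p.1 p.2]
  -- rewrite indicator and swap
  have hswap : phasedIndicator ε μ J xhat e kmin kmax z
      = ‖∫ y, ∫ k in Set.Ioo kmin kmax, F k y‖ := by
    rw [phasedIndicator]
    rw [show (∫ k in Set.Ioo kmin kmax,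
        dotC e (farField ε μ k J xhat) * Complex.exp (Complex.I * k * ((inner ℝ xhat z : ℝ) : ℂ)))
        = ∫ k in Set.Ioo kmin kmax, ∫ y, F k y from
      integral_congr_ae (Filter.Eventually.of_forall fun k => hkeq k)]
    rw [MeasureTheory.integral_integral_swap hF]
  rw [hswap]
  -- pointwise k-integral bound
  have hbound : ∀ y : R3, ‖∫ k in Set.Ioo kmin kmax, F k y‖
      ≤ (2 * kmax * (μ / s) / δ) * ‖g y‖ := by
    intro y
    have hfac : (∫ k in Set.Ioo kmin kmax, F k y)
        = (Complex.I * ((μ / s : ℝ) : ℂ) * g y) *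
          ∫ k in Set.Ioo kmin kmax, (k : ℂ) * Complex.exp (Complex.I * k * (a y : ℂ)) := by
      rw [hF_def, MeasureTheory.integral_const_mul]
    by_cases hy : y ∈ tsupport J
    · have hker := kernel_bound hδ (by simpa [ha_def] using hfar y hy) hkmin hkk.le
      rw [hfac, norm_mul]
      have h1 : ‖Complex.I * ((μ / s : ℝ) : ℂ) * g y‖ = (μ / s) * ‖g y‖ := by
        simp only [norm_mul, Complex.norm_I, Complex.norm_real, Real.norm_eq_abs, one_mul]
        rw [_root_.abs_of_nonneg (by positivity : (0:ℝ) ≤ μ / s)]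
      rw [h1]
      calc (μ / s) * ‖g y‖ * ‖∫ k in Set.Ioo kmin kmax, (k : ℂ) * Complex.exp (Complex.I * k * (a y : ℂ))‖
          ≤ (μ / s) * ‖g y‖ * (2 * kmax / δ) := by
            apply mul_le_mul_of_nonneg_left hker (by positivity)
        _ = (2 * kmax * (μ / s) / δ) * ‖g y‖ := by ring
    · have hgy : g y = 0 := by
        rw [hg_def]
        simp only
        rw [image_eq_zero_of_notMem_tsupport hy]
        simp [dotC]
      rw [hfac, hgy]
      simp
  calc ‖∫ y, ∫ k in Set.Ioo kmin kmax, F k y‖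
      ≤ ∫ y, (2 * kmax * (μ / s) / δ) * ‖g y‖ := by
        apply MeasureTheory.norm_integral_le_of_norm_le (hgi.norm.const_mul _)
        exact Filter.Eventually.of_forall hbound
    _ = (2 * kmax * (μ / s) / δ) * ∫ y, ‖g y‖ := MeasureTheory.integral_const_mul _ _
    _ = (2 * kmax * Real.sqrt (μ / ε) / δ) * ∫ y, ‖dotC e (J y)‖ := by
        have hsq : Real.sqrt (μ / ε) = μ / s := by
          rw [hs_def, show μ / ε = μ ^ 2 / (ε * μ) by field_simp,
            Real.sqrt_div (by positivity) , Real.sqrt_sq hμ.le]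
        rw [hsq]

end
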